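/- Exchange step for transfer sequences: if a sequence of two feasible unit transfers consists of a non-extremal transfer (u,v) followed by an extremal transfer (p,q) (where p maximizes ℓ and q minimizes r in the initial state), and both composite states are feasible, then performing the extremal transfer first yields, after the first step, a state whose potential max ℓ − min r is less than or equal to that after the non-extremal transfer; and the final state after both transfers is the same vector whenever {u,v} ∩ {p,q} = ∅. -/
import Mathlib


open scoped BigOperators Classical

/-- Left boundary value `ℓ_t` of the cut: `L_t[i_t - 1]` if `i_t > 0`, else `⊥` (−∞). -/
noncomputable def lcut {m : ℕ} (n : Fin m → ℕ) (L : ∀ t, Fin (n t) → ℝ)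
    (i : Fin m → ℕ) (t : Fin m) : EReal :=
  if h : 0 < i t ∧ i t ≤ n t then ((L t ⟨i t - 1, by omega⟩ : ℝ) : EReal) else ⊥

/-- Right boundary value `r_t` of the cut: `L_t[i_t]` if `i_t < n_t`, else `⊤` (+∞). -/
noncomputable def rcut {m : ℕ} (n : Fin m → ℕ) (L : ∀ t, Fin (n t) → ℝ)
    (i : Fin m → ℕ) (t : Fin m) : EReal :=
  if h : i t < n t then ((L t ⟨i t, h⟩ : ℝ) : EReal) else ⊤

/-- A unit transfer moving one unit of index mass from list `a` to list `b`. -/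
def transfer {m : ℕ} (i : Fin m → ℕ) (a b : Fin m) : Fin m → ℕ :=
  Function.update (Function.update i a (i a - 1)) b (i b + 1)

section Helpers

variable {m : ℕ} {n : Fin m → ℕ} {L : ∀ t, Fin (n t) → ℝ} {i : Fin m → ℕ} {a b t : Fin m}

lemma transfer_src (hab : a ≠ b) : transfer i a b a = i a - 1 := by
  simp [transfer, Function.update_of_ne hab]

lemma transfer_tgt : transfer i a b b = i b + 1 := by
  simp [transfer]

lemma transfer_other (hta : t ≠ a) (htb : t ≠ b) : transfer i a b t = i t := by
  simp [transfer, Function.update_of_ne htb, Function.update_of_ne hta]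

lemma lcut_congr {j : Fin m → ℕ} (h : i t = j t) : lcut n L i t = lcut n L j t := by
  simp only [lcut, h]

lemma rcut_congr {j : Fin m → ℕ} (h : i t = j t) : rcut n L i t = rcut n L j t := by
  simp only [rcut, h]

lemma lcut_le_rcut (hmono : ∀ t, Monotone (L t)) : lcut n L i t ≤ rcut n L i t := by
  unfold lcut rcut
  split_ifs with h1 h2
  · exact EReal.coe_le_coe_iff.2 (hmono t (by simp only [Fin.mk_le_mk]; omega))
  · exact le_top
  · exact bot_le
  · exact bot_le

lemma lcut_mono (hmono : ∀ t, Monotone (L t)) {j : Fin m → ℕ}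
    (h : j t ≤ i t) (h2 : i t ≤ n t) : lcut n L j t ≤ lcut n L i t := by
  unfold lcut
  split_ifs with h3 h4
  · exact EReal.coe_le_coe_iff.2 (hmono t (by simp only [Fin.mk_le_mk]; omega))
  · exact absurd ⟨by omega, h2⟩ h4
  · exact bot_le
  · exact le_refl _

lemma rcut_mono (hmono : ∀ t, Monotone (L t)) {j : Fin m → ℕ}
    (h : i t ≤ j t) : rcut n L i t ≤ rcut n L j t := by
  unfold rcut
  split_ifs with h3 h4
  · exact EReal.coe_le_coe_iff.2 (hmono t (by simp only [Fin.mk_le_mk]; omega))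
  · exact le_top
  · exact absurd (by omega) h3
  · exact le_refl _

lemma lcut_transfer_tgt (hb : i b < n b) :
    lcut n L (transfer i a b) b = rcut n L i b := by
  unfold lcut rcut
  simp only [transfer_tgt, Nat.add_sub_cancel]
  rw [dif_pos (by omega), dif_pos hb]

lemma rcut_transfer_src (hab : a ≠ b) (ha : 1 ≤ i a) (ha2 : i a ≤ n a) :
    rcut n L (transfer i a b) a = lcut n L i a := by
  unfold lcut rcut
  simp only [transfer_src hab]
  rw [dif_pos (show i a - 1 < n a by omega), dif_pos ⟨ha, ha2⟩]

lemma lcut_transfer_src_le (hmono : ∀ t, Monotone (L t)) (hab : a ≠ b) (ha2 : i a ≤ n a) :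
    lcut n L (transfer i a b) a ≤ lcut n L i a :=
  lcut_mono hmono (by rw [transfer_src hab]; omega) ha2

lemma rcut_transfer_tgt_ge (hmono : ∀ t, Monotone (L t)) :
    rcut n L i b ≤ rcut n L (transfer i a b) b :=
  rcut_mono hmono (by rw [transfer_tgt]; omega)

end Helpers

/-- exchange step: performing the extremal transfer `(p,q)` first
yields a potential (componentwise on `(max ℓ, −min r)`) no worse than performing
the other transfer `(u,v)` first, and when `{u,v} ∩ {p,q} = ∅` the final state
after both transfers is the same vector. -/
theorem exchange_step_for_transfers {m : ℕ} (n : Fin m → ℕ) (L : ∀ t, Fin (n t) → ℝ)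
    (hmono : ∀ t, Monotone (L t)) (i : Fin m → ℕ) (hle : ∀ t, i t ≤ n t)
    (u v p q : Fin m) (huv : u ≠ v) (hpq : p ≠ q)
    (hpmax : ∀ t, lcut n L i t ≤ lcut n L i p)
    (hqmin : ∀ t, rcut n L i q ≤ rcut n L i t)
    (hu : 1 ≤ i u) (hv : i v < n v) (hp : 1 ≤ i p) (hq : i q < n q)
    (hfeas1 : 1 ≤ transfer i u v p) (hfeas2 : transfer i u v q < n q)
    (hfeas3 : 1 ≤ transfer i p q u) (hfeas4 : transfer i p q v < n v) :
    ((⨆ t, lcut n L (transfer i p q) t) ≤ ⨆ t, lcut n L (transfer i u v) t) ∧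
    ((⨅ t, rcut n L (transfer i u v) t) ≤ ⨅ t, rcut n L (transfer i p q) t) ∧
    (u ≠ p → u ≠ q → v ≠ p → v ≠ q →
      transfer (transfer i u v) p q = transfer (transfer i p q) u v) := by
  have hsup_p : p ≠ u → lcut n L i p ≤ ⨆ s, lcut n L (transfer i u v) s := by
    intro hpu
    by_cases hpv : p = v
    · refine le_iSup_of_le v ?_
      rw [lcut_transfer_tgt hv, ← hpv]
      exact lcut_le_rcut hmono
    · refine le_iSup_of_le p ?_
      rw [lcut_congr (transfer_other hpu hpv)]
  have hinf_q : q ≠ v → (⨅ s, rcut n L (transfer i u v) s) ≤ rcut n L i q := by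
    intro hqv
    by_cases hqu : q = u
    · refine iInf_le_of_le u ?_
      rw [rcut_transfer_src huv hu (hle u), hqu]
      exact lcut_le_rcut hmono
    · refine iInf_le_of_le q ?_
      rw [rcut_congr (transfer_other hqu hqv)]
  refine ⟨?_, ?_, ?_⟩
  · refine iSup_le fun t => ?_
    by_cases htq : t = q
    · subst htq
      rw [lcut_transfer_tgt hq]
      refine le_iSup_of_le v ?_
      rw [lcut_transfer_tgt hv]
      exact hqmin v
    by_cases htp : t = p
    · subst htp
      by_cases hpu : t = u
      · subst hpu
        refine le_iSup_of_le t ?_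
        rw [lcut_congr (show transfer i t q t = transfer i t v t by
          rw [transfer_src hpq, transfer_src huv])]
      · calc lcut n L (transfer i t q) t ≤ lcut n L i t :=
              lcut_transfer_src_le hmono hpq (hle t)
          _ ≤ _ := hsup_p hpu
    · rw [lcut_congr (transfer_other htp htq)]
      by_cases htu : t = u
      · subst htu
        exact (hpmax t).trans (hsup_p (fun h => htp h.symm))
      by_cases htv : t = v
      · subst htv
        refine le_iSup_of_le t ?_
        rw [lcut_transfer_tgt hv]
        exact lcut_le_rcut hmono
      · refine le_iSup_of_le t ?_
        rw [lcut_congr (transfer_other htu htv)]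
  · refine le_iInf fun t => ?_
    by_cases htp : t = p
    · subst htp
      rw [rcut_transfer_src hpq hp (hle t)]
      refine iInf_le_of_le u ?_
      rw [rcut_transfer_src huv hu (hle u)]
      exact hpmax u
    by_cases htq : t = q
    · subst htq
      by_cases hqv : t = v
      · subst hqv
        refine iInf_le_of_le t ?_
        exact le_of_eq (rcut_congr (show transfer i u t t = transfer i p t t by
          rw [transfer_tgt, transfer_tgt]))
      · exact (hinf_q hqv).trans (rcut_transfer_tgt_ge hmono)
    · rw [rcut_congr (transfer_other htp htq)]
      by_cases htu : t = u
      · subst htu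
        refine iInf_le_of_le t ?_
        rw [rcut_transfer_src huv hu (hle t)]
        exact lcut_le_rcut hmono
      by_cases htv : t = v
      · subst htv
        exact (hinf_q (fun h => htq h.symm)).trans (hqmin t)
      · refine iInf_le_of_le t ?_
        rw [rcut_congr (transfer_other htu htv)]
  · intro hup huq hvp hvq
    funext t
    by_cases h1 : t = u
    · subst h1; simp [transfer_other hup huq, transfer_src huv]
    by_cases h2 : t = v
    · subst h2; simp [transfer_other hvp hvq, transfer_tgt]
    by_cases h3 : t = p
    · subst h3; simp [transfer_src hpq, transfer_other (Ne.symm hup) (Ne.symm hvp)]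
    by_cases h4 : t = q
    · subst h4; simp [transfer_tgt, transfer_other (Ne.symm huq) (Ne.symm hvq)]
    · simp [transfer_other h1 h2, transfer_other h3 h4]
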